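/- arXiv:1701.05328 — 2 statements merged into one kernel-verified Lean document; each statement's English description precedes it below -/
import Mathlib

section
/- Let F be a field, F ∈ F[X₁,…,X_N] a nonzero polynomial with at most s monomials, and α ∈ F^N a vector with all coordinates nonzero. Then the shifted polynomial G(X) = F(X + α) contains a monomial whose support (number of distinct variables appearing in it) is at most log₂ s. -/
open MvPolynomial

namespace Stmt5Aux
variable {F : Type*} [Field F] {N : ℕ}


/-- union of supports of all coefficients of a polynomial over MvPolynomial -/
noncomputable def UPoly (P : Polynomial (MvPolynomial (Fin N) F)) : Finset (Fin N →₀ ℕ) :=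
  (Finset.range (P.natDegree + 1)).biUnion fun j => (P.coeff j).support

lemma coeff_supp_subset_UPoly (P : Polynomial (MvPolynomial (Fin N) F)) (k : ℕ) :
    (P.coeff k).support ⊆ UPoly P := by
  by_cases h : P.coeff k = 0
  · simp [h]
  · intro m hm
    exact Finset.mem_biUnion.mpr ⟨k, Finset.mem_range.mpr
      (Nat.lt_succ_of_le (Polynomial.le_natDegree_of_ne_zero h)), hm⟩

lemma supp_C_mul (b : F) (p : MvPolynomial (Fin N) F) :
    (MvPolynomial.C b * p).support ⊆ p.support := by
  intro m hm
  rw [MvPolynomial.mem_support_iff, MvPolynomial.coeff_C_mul] at hm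
  rw [MvPolynomial.mem_support_iff]
  exact fun h => hm (by rw [h, mul_zero])

lemma eval_supp (c' : F) (P : Polynomial (MvPolynomial (Fin N) F)) :
    (P.eval (MvPolynomial.C c')).support ⊆ UPoly P := by
  rw [Polynomial.eval_eq_sum_range]
  refine (MvPolynomial.support_sum).trans ?_
  intro m hm
  obtain ⟨i, hi, hmi⟩ := Finset.mem_biUnion.mp hm
  have : (P.coeff i * MvPolynomial.C c' ^ i).support ⊆ (P.coeff i).support := by
    rw [← map_pow, mul_comm]
    exact supp_C_mul _ _
  exact coeff_supp_subset_UPoly P i (this hmi)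

lemma coeff_rel (c' : F) {P Q₁ : Polynomial (MvPolynomial (Fin N) F)}
    (hPQ : P = (Polynomial.X - Polynomial.C (MvPolynomial.C c')) * Q₁) :
    (∀ k : ℕ, P.coeff (k + 1) = Q₁.coeff k - MvPolynomial.C c' * Q₁.coeff (k + 1)) ∧
      P.coeff 0 = -(MvPolynomial.C c') * Q₁.coeff 0 := by
  constructor
  · intro k
    rw [hPQ, sub_mul, Polynomial.coeff_sub, Polynomial.coeff_X_mul, Polynomial.coeff_C_mul]
  · rw [hPQ, Polynomial.mul_coeff_zero]
    simp

lemma quot_coeff_supp (c' : F) {P Q₁ : Polynomial (MvPolynomial (Fin N) F)}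
    (hPQ : P = (Polynomial.X - Polynomial.C (MvPolynomial.C c')) * Q₁) (j : ℕ) :
    (Q₁.coeff j).support ⊆ UPoly P := by
  obtain ⟨hrel, -⟩ := coeff_rel c' hPQ
  suffices H : ∀ d j : ℕ, Q₁.natDegree ≤ j + d → (Q₁.coeff j).support ⊆ UPoly P by
    exact H Q₁.natDegree j (Nat.le_add_left _ _)
  intro d
  induction d with
  | zero =>
    intro j hj
    have h1 : Q₁.coeff (j + 1) = 0 :=
      Polynomial.coeff_eq_zero_of_natDegree_lt (by omega)
    have : Q₁.coeff j = P.coeff (j + 1) := by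
      rw [hrel j, h1, mul_zero, sub_zero]
    rw [this]
    exact coeff_supp_subset_UPoly P _
  | succ d ih =>
    intro j hj
    by_cases hd : Q₁.natDegree ≤ j + d
    · exact ih j hd
    · intro m hm
      rw [MvPolynomial.mem_support_iff] at hm
      have hQj : Q₁.coeff j = P.coeff (j + 1) + MvPolynomial.C c' * Q₁.coeff (j + 1) := by
        rw [hrel j]; ring
      by_cases hP1 : MvPolynomial.coeff m (P.coeff (j + 1)) = 0
      · have : MvPolynomial.coeff m (Q₁.coeff j) =
            c' * MvPolynomial.coeff m (Q₁.coeff (j + 1)) := by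
          rw [hQj, MvPolynomial.coeff_add, hP1, zero_add, MvPolynomial.coeff_C_mul]
        apply ih (j + 1) (by omega)
        rw [MvPolynomial.mem_support_iff]
        intro h0
        rw [this, h0, mul_zero] at hm
        exact hm rfl
      · exact coeff_supp_subset_UPoly P (j + 1) (MvPolynomial.mem_support_iff.mpr hP1)

lemma exists_mult (c' : F) :
    ∀ d (P : Polynomial (MvPolynomial (Fin N) F)), P.natDegree ≤ d → P ≠ 0 →
      ∃ (e : ℕ) (Q : Polynomial (MvPolynomial (Fin N) F)),
        P = (Polynomial.X - Polynomial.C (MvPolynomial.C c')) ^ e * Q ∧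
        Q.eval (MvPolynomial.C c') ≠ 0 ∧
        (Q.eval (MvPolynomial.C c')).support ⊆ UPoly P := by
  intro d
  induction d with
  | zero =>
    intro P hdeg hP0
    refine ⟨0, P, by rw [pow_zero, one_mul], ?_, eval_supp c' P⟩
    obtain ⟨b, rfl⟩ := Polynomial.natDegree_eq_zero.mp (Nat.le_zero.mp hdeg)
    simpa using fun h => hP0 (by rw [h, map_zero])
  | succ d ih =>
    intro P hdeg hP0
    by_cases hev : P.eval (MvPolynomial.C c') = 0
    · obtain ⟨Q₁, hPQ⟩ := (Polynomial.dvd_iff_isRoot.mpr hev)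
      have hQ₁0 : Q₁ ≠ 0 := by
        rintro rfl; rw [mul_zero] at hPQ; exact hP0 hPQ
      have hXC : (Polynomial.X - Polynomial.C (MvPolynomial.C c') :
          Polynomial (MvPolynomial (Fin N) F)) ≠ 0 := Polynomial.X_sub_C_ne_zero _
      have hdeg1 : P.natDegree = Q₁.natDegree + 1 := by
        rw [hPQ, Polynomial.natDegree_mul hXC hQ₁0, Polynomial.natDegree_X_sub_C]
        ring
      obtain ⟨e, Q, hfac, hne, hsub⟩ := ih Q₁ (by omega) hQ₁0
      refine ⟨e + 1, Q, ?_, hne, ?_⟩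
      · rw [hPQ, hfac, pow_succ]; ring
      · refine hsub.trans (Finset.biUnion_subset.mpr fun j _ => quot_coeff_supp c' hPQ j)
    · exact ⟨0, P, by rw [pow_zero, one_mul], hev, eval_supp c' P⟩




lemma count (a : F) (ha : a ≠ 0) {P Q₁ : Polynomial (MvPolynomial (Fin N) F)}
    (hPQ : P = (Polynomial.X - Polynomial.C (MvPolynomial.C a)) * Q₁) :
    2 * (UPoly Q₁).card ≤
      ∑ j ∈ Finset.range (P.natDegree + 1), ((P.coeff j).support).card := by
  classical
  have hrel : ∀ k : ℕ, P.coeff (k + 1) = Q₁.coeff k - MvPolynomial.C a * Q₁.coeff (k + 1) := by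
    intro k
    rw [hPQ, sub_mul, Polynomial.coeff_sub, Polynomial.coeff_X_mul, Polynomial.coeff_C_mul]
  have hrel0 : P.coeff 0 = -(MvPolynomial.C a) * Q₁.coeff 0 := by
    rw [hPQ, Polynomial.mul_coeff_zero]; simp
  set W : Finset (ℕ × (Fin N →₀ ℕ)) :=
    (Finset.range (P.natDegree + 1)).biUnion
      (fun j => (P.coeff j).support.image (Prod.mk j)) with hW
  have hWcard : W.card = ∑ j ∈ Finset.range (P.natDegree + 1), ((P.coeff j).support).card := by
    rw [hW, Finset.card_biUnion]
    · exact Finset.sum_congr rfl fun j _ =>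
        Finset.card_image_of_injective _ (fun m m' h => by simpa using h)
    · intro j _ j' _ hjj'
      simp only [Finset.disjoint_left, Finset.mem_image]
      rintro ⟨x, y⟩ ⟨m, _, h⟩ ⟨m', _, h'⟩
      obtain ⟨rfl, rfl⟩ := Prod.mk.injEq .. ▸ h
      obtain ⟨rfl, -⟩ := Prod.mk.injEq .. ▸ h'
      exact hjj' rfl
  have hmemW : ∀ (j : ℕ) (m : Fin N →₀ ℕ), m ∈ (P.coeff j).support → (j, m) ∈ W := by
    intro j m hm
    have hj : j ≤ P.natDegree :=
      Polynomial.le_natDegree_of_ne_zero (fun h => by simp [h] at hm)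
    exact Finset.mem_biUnion.mpr ⟨j, Finset.mem_range.mpr (Nat.lt_succ_of_le hj),
      Finset.mem_image.mpr ⟨m, hm, rfl⟩⟩
  set J : (Fin N →₀ ℕ) → Finset ℕ :=
    fun m => (Finset.range (Q₁.natDegree + 1)).filter (fun j => m ∈ (Q₁.coeff j).support) with hJ
  have hJzero : ∀ (m : Fin N →₀ ℕ) (k : ℕ), k ∉ J m → MvPolynomial.coeff m (Q₁.coeff k) = 0 := by
    intro m k hk
    by_cases hkd : k ≤ Q₁.natDegree
    · by_contra h
      exact hk (Finset.mem_filter.mpr ⟨Finset.mem_range.mpr (Nat.lt_succ_of_le hkd),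
        MvPolynomial.mem_support_iff.mpr h⟩)
    · rw [Polynomial.coeff_eq_zero_of_natDegree_lt (by omega)]
      simp
  have hJne : ∀ m ∈ UPoly Q₁, (J m).Nonempty := by
    intro m hm
    obtain ⟨j, hj, hmj⟩ := Finset.mem_biUnion.mp hm
    exact ⟨j, Finset.mem_filter.mpr ⟨hj, hmj⟩⟩
  set T : (Fin N →₀ ℕ) → Finset (ℕ × (Fin N →₀ ℕ)) :=
    fun m => if h : (J m).Nonempty
      then {((J m).min' h, m), ((J m).max' h + 1, m)} else ∅ with hT
  have hTcard : ∀ m ∈ UPoly Q₁, (T m).card = 2 := by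
    intro m hm
    rw [hT]
    simp only [dif_pos (hJne m hm)]
    refine Finset.card_pair ?_
    have := (J m).min'_le _ ((J m).max'_mem (hJne m hm))
    intro h
    have := (Prod.mk.injEq .. ▸ h).1
    omega
  have hTsub : ∀ m ∈ UPoly Q₁, T m ⊆ W := by
    intro m hm
    have hne := hJne m hm
    rw [hT]
    simp only [dif_pos hne]
    have hmin : m ∈ (P.coeff ((J m).min' hne)).support := by
      rw [MvPolynomial.mem_support_iff]
      have hminJ := (J m).min'_mem hne
      have hminne : MvPolynomial.coeff m (Q₁.coeff ((J m).min' hne)) ≠ 0 :=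
        MvPolynomial.mem_support_iff.mp (Finset.mem_filter.mp hminJ).2
      rcases eq_or_ne ((J m).min' hne) 0 with h0 | hne0
      · rw [h0] at hminne ⊢
        rw [hrel0]
        simp only [neg_mul, MvPolynomial.coeff_neg, MvPolynomial.coeff_C_mul]
        exact fun h => hminne (by
          have := neg_eq_zero.mp h
          exact (mul_eq_zero.mp this).resolve_left ha)
      · obtain ⟨k, hs⟩ := Nat.exists_eq_succ_of_ne_zero hne0
        rw [hs] at hminne ⊢
        have hknot : k ∉ J m := by
          intro hkJ
          have := (J m).min'_le _ hkJ
          omega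
        rw [hrel k, MvPolynomial.coeff_sub, MvPolynomial.coeff_C_mul, hJzero m k hknot,
          zero_sub]
        simp only [ne_eq, neg_eq_zero, mul_eq_zero, not_or]
        exact ⟨ha, by simpa [Nat.succ_eq_add_one, ← hs] using hminne⟩
    have hmax : m ∈ (P.coeff ((J m).max' hne + 1)).support := by
      rw [MvPolynomial.mem_support_iff]
      have hmaxJ := (J m).max'_mem hne
      have hmaxne : MvPolynomial.coeff m (Q₁.coeff ((J m).max' hne)) ≠ 0 :=
        MvPolynomial.mem_support_iff.mp (Finset.mem_filter.mp hmaxJ).2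
      have hknot : ((J m).max' hne + 1) ∉ J m := by
        intro hkJ
        have := (J m).le_max' _ hkJ
        omega
      rw [hrel, MvPolynomial.coeff_sub, MvPolynomial.coeff_C_mul, hJzero m _ hknot,
        mul_zero, sub_zero]
      exact hmaxne
    intro p hp
    rcases Finset.mem_insert.mp hp with rfl | hp
    · exact hmemW _ _ hmin
    · rw [Finset.mem_singleton.mp hp]
      exact hmemW _ _ hmax
  have hdisj : (↑(UPoly Q₁ : Finset (Fin N →₀ ℕ)) : Set (Fin N →₀ ℕ)).PairwiseDisjoint T := by
    intro m hm m' hm' hne'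
    simp only [Function.onFun, Finset.disjoint_left, hT]
    intro p hp hp'
    rcases em ((J m).Nonempty) with h | h
    · rw [dif_pos h] at hp
      rcases em ((J m').Nonempty) with h' | h'
      · rw [dif_pos h'] at hp'
        have e1 : p.2 = m := by
          rcases Finset.mem_insert.mp hp with rfl | hp1
          · rfl
          · rw [Finset.mem_singleton.mp hp1]
        have e2 : p.2 = m' := by
          rcases Finset.mem_insert.mp hp' with rfl | hp1
          · rfl
          · rw [Finset.mem_singleton.mp hp1]
        exact hne' (e1 ▸ e2)
      · rw [dif_neg h'] at hp'; exact absurd hp' (Finset.notMem_empty p)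
    · rw [dif_neg h] at hp; exact absurd hp (Finset.notMem_empty p)
  calc 2 * (UPoly Q₁).card = ∑ m ∈ UPoly Q₁, (T m).card := by
        rw [Finset.sum_congr rfl hTcard, Finset.sum_const, smul_eq_mul, mul_comm]
    _ = ((UPoly Q₁).biUnion T).card := (Finset.card_biUnion hdisj).symm
    _ ≤ W.card := Finset.card_le_card (Finset.biUnion_subset.mpr hTsub)
    _ = _ := hWcard



lemma slices_card (f : MvPolynomial (Fin (N + 1)) F) :
    ∑ j ∈ Finset.range ((finSuccEquiv F N f).natDegree + 1),
      ((finSuccEquiv F N f).coeff j).support.card ≤ f.support.card := by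
  classical
  set P := finSuccEquiv F N f with hP
  set W : Finset (ℕ × (Fin N →₀ ℕ)) :=
    (Finset.range (P.natDegree + 1)).biUnion
      (fun j => (P.coeff j).support.image (Prod.mk j)) with hW
  have hWcard : W.card = ∑ j ∈ Finset.range (P.natDegree + 1), ((P.coeff j).support).card := by
    rw [hW, Finset.card_biUnion]
    · exact Finset.sum_congr rfl fun j _ =>
        Finset.card_image_of_injective _ (fun m m' h => by simpa using h)
    · intro j _ j' _ hjj'
      simp only [Finset.disjoint_left, Finset.mem_image]
      rintro ⟨x, y⟩ ⟨m, _, h⟩ ⟨m', _, h'⟩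
      obtain ⟨rfl, rfl⟩ := Prod.mk.injEq .. ▸ h
      obtain ⟨rfl, -⟩ := Prod.mk.injEq .. ▸ h'
      exact hjj' rfl
  rw [← hWcard]
  refine Finset.card_le_card_of_injOn (fun p => Finsupp.cons p.1 p.2) ?_ ?_
  · rintro ⟨j, m⟩ hp
    obtain ⟨j', _, hmem⟩ := Finset.mem_biUnion.mp hp
    obtain ⟨m', hm', heq⟩ := Finset.mem_image.mp hmem
    obtain ⟨rfl, rfl⟩ := Prod.mk.injEq .. ▸ heq
    exact mem_support_coeff_finSuccEquiv.mp hm'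
  · rintro ⟨j, m⟩ - ⟨j', m'⟩ - h
    dsimp only at h
    have h0 : j = j' := by
      have := DFunLike.congr_fun h 0
      simpa [Finsupp.cons_zero] using this
    have h1 : m = m' := by
      have := congrArg Finsupp.tail h
      rwa [Finsupp.tail_cons, Finsupp.tail_cons] at this
    simp [h0, h1]

lemma support_cons_subset (e : ℕ) (m' : Fin N →₀ ℕ) :
    (Finsupp.cons e m').support ⊆
      insert 0 (m'.support.map ⟨Fin.succ, Fin.succ_injective N⟩) := by
  intro i hi
  rw [Finsupp.mem_support_iff] at hi
  revert hi
  refine Fin.cases ?_ ?_ i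
  · intro _
    exact Finset.mem_insert_self _ _
  · intro j hj
    rw [Finsupp.cons_succ] at hj
    exact Finset.mem_insert_of_mem (Finset.mem_map.mpr
      ⟨j, Finsupp.mem_support_iff.mpr hj, rfl⟩)

lemma support_cons_zero_subset (m' : Fin N →₀ ℕ) :
    (Finsupp.cons (0:ℕ) m').support ⊆ m'.support.map ⟨Fin.succ, Fin.succ_injective N⟩ := by
  intro i hi
  rw [Finsupp.mem_support_iff] at hi
  revert hi
  refine Fin.cases ?_ ?_ i
  · intro h
    rw [Finsupp.cons_zero] at h
    exact absurd rfl h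
  · intro j hj
    rw [Finsupp.cons_succ] at hj
    exact Finset.mem_map.mpr ⟨j, Finsupp.mem_support_iff.mpr hj, rfl⟩



lemma finSuccEquiv_shift (α : Fin (N + 1) → F) (f : MvPolynomial (Fin (N + 1)) F) :
    MvPolynomial.finSuccEquiv F N
        (MvPolynomial.aeval (fun i => MvPolynomial.X i + MvPolynomial.C (α i)) f) =
      (Polynomial.map
          (↑(MvPolynomial.aeval (fun i => MvPolynomial.X i + MvPolynomial.C (α i.succ)) :
              MvPolynomial (Fin N) F →ₐ[F] MvPolynomial (Fin N) F) :
            MvPolynomial (Fin N) F →+* MvPolynomial (Fin N) F)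
          (MvPolynomial.finSuccEquiv F N f)).comp
        (Polynomial.X + Polynomial.C (MvPolynomial.C (α 0))) := by
  induction f using MvPolynomial.induction_on with
  | C a =>
    simp [MvPolynomial.aeval_C, MvPolynomial.algebraMap_eq, MvPolynomial.finSuccEquiv_apply,
      Polynomial.C_comp]
  | add p q hp hq =>
    simp only [map_add, Polynomial.map_add, Polynomial.add_comp, hp, hq]
  | mul_X p i hp =>
    simp only [map_mul, Polynomial.map_mul, Polynomial.mul_comp, hp]
    refine congrArg (HMul.hMul _) ?_
    refine Fin.cases ?_ ?_ i
    · rw [MvPolynomial.aeval_X, map_add, MvPolynomial.finSuccEquiv_X_zero]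
      simp [MvPolynomial.finSuccEquiv_apply, Polynomial.C_comp, Polynomial.X_comp,
        MvPolynomial.algebraMap_eq]
    · intro j
      rw [MvPolynomial.aeval_X, map_add, MvPolynomial.finSuccEquiv_X_succ]
      simp [MvPolynomial.finSuccEquiv_apply, Polynomial.C_comp, MvPolynomial.algebraMap_eq]

lemma coeff_shift_eq (α : Fin (N + 1) → F) (f : MvPolynomial (Fin (N + 1)) F)
    (e : ℕ) (Q : Polynomial (MvPolynomial (Fin N) F))
    (hPQ : MvPolynomial.finSuccEquiv F N f =
      (Polynomial.X - Polynomial.C (MvPolynomial.C (α 0))) ^ e * Q) :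
    (MvPolynomial.finSuccEquiv F N
        (MvPolynomial.aeval (fun i => MvPolynomial.X i + MvPolynomial.C (α i)) f)).coeff e =
      MvPolynomial.aeval (fun i => MvPolynomial.X i + MvPolynomial.C (α i.succ))
        (Q.eval (MvPolynomial.C (α 0))) := by
  rw [finSuccEquiv_shift, hPQ]
  rw [Polynomial.map_mul, Polynomial.map_pow, Polynomial.map_sub, Polynomial.map_X,
    Polynomial.map_C, Polynomial.mul_comp, Polynomial.pow_comp, Polynomial.sub_comp,
    Polynomial.X_comp, Polynomial.C_comp]
  have hCc : (↑(MvPolynomial.aeval (fun i => MvPolynomial.X i + MvPolynomial.C (α i.succ)) :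
      MvPolynomial (Fin N) F →ₐ[F] MvPolynomial (Fin N) F) :
        MvPolynomial (Fin N) F →+* MvPolynomial (Fin N) F)
      (MvPolynomial.C (α 0)) = MvPolynomial.C (α 0) := by
    simp [MvPolynomial.aeval_C, MvPolynomial.algebraMap_eq]
  rw [hCc, add_sub_cancel_right]
  have h2 := Polynomial.coeff_X_pow_mul
    ((Polynomial.map
      (↑(MvPolynomial.aeval (fun i => MvPolynomial.X i + MvPolynomial.C (α i.succ)) :
          MvPolynomial (Fin N) F →ₐ[F] MvPolynomial (Fin N) F) :
        MvPolynomial (Fin N) F →+* MvPolynomial (Fin N) F) Q).comp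
      (Polynomial.X + Polynomial.C (MvPolynomial.C (α 0)))) e 0
  rw [zero_add] at h2
  rw [h2, Polynomial.coeff_zero_eq_eval_zero, Polynomial.eval_comp, Polynomial.eval_add,
    Polynomial.eval_X, Polynomial.eval_C, zero_add, Polynomial.eval_map]
  conv_lhs => rw [← hCc]
  rw [Polynomial.eval₂_hom]
  rfl


theorem key : ∀ (N : ℕ) (f : MvPolynomial (Fin N) F), f ≠ 0 →
    ∀ (α : Fin N → F), (∀ i, α i ≠ 0) →
    ∃ m ∈ (MvPolynomial.aeval
        (fun i => MvPolynomial.X i + MvPolynomial.C (α i)) f).support,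
      2 ^ m.support.card ≤ f.support.card := by
  intro N
  induction N with
  | zero =>
    intro f hf α hα
    obtain ⟨a, rfl⟩ := MvPolynomial.C_surjective (Fin 0) f
    have ha : a ≠ 0 := fun h => hf (by rw [h, map_zero])
    refine ⟨0, ?_, ?_⟩
    · rw [MvPolynomial.aeval_C, MvPolynomial.algebraMap_eq, MvPolynomial.mem_support_iff]
      simp [ha]
    · simpa using Finset.card_pos.mpr (MvPolynomial.support_nonempty.mpr hf)
  | succ N ih =>
    intro f hf α hα
    set P := MvPolynomial.finSuccEquiv F N f with hPdef
    have hP0 : P ≠ 0 := fun h => hf ((map_eq_zero_iff _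
      (MvPolynomial.finSuccEquiv F N).injective).mp h)
    have hSig := slices_card f
    by_cases hev : Polynomial.eval (MvPolynomial.C (α 0)) P = 0
    · -- root case
      obtain ⟨Q₁, hPQ⟩ := Polynomial.dvd_iff_isRoot.mpr hev
      have hQ₁0 : Q₁ ≠ 0 := by rintro rfl; rw [mul_zero] at hPQ; exact hP0 hPQ
      obtain ⟨e, Q, hfac, hne, hsub⟩ := exists_mult (α 0) Q₁.natDegree Q₁ le_rfl hQ₁0
      have hPQ' : P = (Polynomial.X - Polynomial.C (MvPolynomial.C (α 0))) ^ (e + 1) * Q := by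
        rw [hPQ, hfac, pow_succ]; ring
      obtain ⟨m', hm'supp, hm'card⟩ :=
        ih (Q.eval (MvPolynomial.C (α 0))) hne (fun i => α i.succ) (fun i => hα i.succ)
      refine ⟨Finsupp.cons (e + 1) m', ?_, ?_⟩
      · rw [MvPolynomial.mem_support_iff, ← MvPolynomial.finSuccEquiv_coeff_coeff,
          coeff_shift_eq α f (e + 1) Q hPQ']
        exact MvPolynomial.mem_support_iff.mp hm'supp
      · have hc1 : (Finsupp.cons (e + 1) m').support.card ≤ m'.support.card + 1 := by
          refine (Finset.card_le_card (support_cons_subset (e + 1) m')).trans ?_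
          rw [Finset.card_insert_of_notMem (by simp [Fin.succ_ne_zero]), Finset.card_map]
        have hcount := count (α 0) (hα 0) hPQ
        have hchain : 2 * (Q.eval (MvPolynomial.C (α 0))).support.card ≤ f.support.card := by
          calc 2 * (Q.eval (MvPolynomial.C (α 0))).support.card
              ≤ 2 * (UPoly Q₁).card := by
                have := Finset.card_le_card hsub; omega
            _ ≤ _ := hcount.trans hSig
        calc (2:ℕ) ^ (Finsupp.cons (e + 1) m').support.card
            ≤ 2 ^ (m'.support.card + 1) := Nat.pow_le_pow_right (by norm_num) hc1
          _ = 2 * 2 ^ m'.support.card := by ring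
          _ ≤ 2 * (Q.eval (MvPolynomial.C (α 0))).support.card := by omega
          _ ≤ f.support.card := hchain
    · -- non-root case
      obtain ⟨m', hm'supp, hm'card⟩ :=
        ih (P.eval (MvPolynomial.C (α 0))) hev (fun i => α i.succ) (fun i => hα i.succ)
      have hPQ' : P = (Polynomial.X - Polynomial.C (MvPolynomial.C (α 0))) ^ 0 * P := by
        rw [pow_zero, one_mul]
      refine ⟨Finsupp.cons 0 m', ?_, ?_⟩
      · rw [MvPolynomial.mem_support_iff, ← MvPolynomial.finSuccEquiv_coeff_coeff,
          coeff_shift_eq α f 0 P hPQ']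
        exact MvPolynomial.mem_support_iff.mp hm'supp
      · have hc1 : (Finsupp.cons (0:ℕ) m').support.card ≤ m'.support.card := by
          refine (Finset.card_le_card (support_cons_zero_subset m')).trans ?_
          rw [Finset.card_map]
        have hchain : (P.eval (MvPolynomial.C (α 0))).support.card ≤ f.support.card := by
          calc (P.eval (MvPolynomial.C (α 0))).support.card
              ≤ (UPoly P).card := Finset.card_le_card (eval_supp (α 0) P)
            _ ≤ ∑ j ∈ Finset.range (P.natDegree + 1), ((P.coeff j).support).card :=
                Finset.card_biUnion_le
            _ ≤ f.support.card := hSig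
        calc (2:ℕ) ^ (Finsupp.cons (0:ℕ) m').support.card
            ≤ 2 ^ m'.support.card := Nat.pow_le_pow_right (by norm_num) hc1
          _ ≤ (P.eval (MvPolynomial.C (α 0))).support.card := hm'card
          _ ≤ f.support.card := hchain

end Stmt5Aux

/-- a nonzero polynomial with at most `s` monomials, shifted by a
full-support vector `α`, has a monomial of support at most `log₂ s`. -/
theorem stmt5 (F : Type*) [Field F] (N s : ℕ) (f : MvPolynomial (Fin N) F)
    (hf : f ≠ 0) (hs : f.support.card ≤ s)
    (α : Fin N → F) (hα : ∀ i, α i ≠ 0) :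
    ∃ m ∈ (MvPolynomial.aeval
        (fun i : Fin N => MvPolynomial.X i + MvPolynomial.C (α i)) f).support,
      m.support.card ≤ Nat.log 2 s := by
  obtain ⟨m, hm, hpow⟩ := Stmt5Aux.key N f hf α hα
  refine ⟨m, hm, ?_⟩
  have h1 : 2 ^ m.support.card ≤ s := hpow.trans hs
  have hs0 : s ≠ 0 := by
    have := Nat.one_le_two_pow (n := m.support.card)
    omega
  exact (Nat.le_log_iff_pow_le one_lt_two hs0).mpr h1
end

section
/- Let F be a field, n, k ∈ ℕ, N = 2^n. For the succinct SV generator G_{n,k}(y, z) = coeff_x(∑_{i=1}^{k} yᵢ·∏_{j=1}^{n}(z_{i,j}x_j + 1 − z_{i,j})): for every family T = {S₁,…,S_k} of k distinct subsets of {1,…,n}, setting z_i = 1_{S_i} for each i yields a polynomial map whose coordinate indexed by S equals yᵢ if S = Sᵢ for some i, and equals 0 if S ∉ T. -/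
open MvPolynomial

/-- Multilinear monomial exponent vector of a subset. -/
noncomputable def mlMon {n : ℕ} (S : Finset (Fin n)) : Fin n →₀ ℕ :=
  ∑ j ∈ S, Finsupp.single j 1

/-- The succinct SV polynomial with `z` specialized to the characteristic vectors of
the subsets `S 0, …, S (k-1)`. -/
noncomputable def svQspec (F : Type*) [Field F] (n k : ℕ)
    (y : Fin k → F) (S : Fin k → Finset (Fin n)) : MvPolynomial (Fin n) F :=
  ∑ i : Fin k, MvPolynomial.C (y i) *
    ∏ j : Fin n,
      (MvPolynomial.C (if j ∈ S i then (1 : F) else 0) * MvPolynomial.X j +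
        MvPolynomial.C (1 - if j ∈ S i then (1 : F) else 0))

lemma mlMon_apply {n : ℕ} (S : Finset (Fin n)) (a : Fin n) :
    mlMon S a = if a ∈ S then 1 else 0 := by
  simp [mlMon, Finsupp.finset_sum_apply, Finsupp.single_apply, Finset.sum_ite_eq']

lemma mlMon_inj {n : ℕ} : Function.Injective (mlMon (n := n)) := by
  intro s t h
  ext a
  have h2 : mlMon s a = mlMon t a := congrFun (congrArg DFunLike.coe h) a
  rw [mlMon_apply, mlMon_apply] at h2
  by_cases hs : a ∈ s <;> by_cases ht : a ∈ t <;> simp_all [h2]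

lemma svQspec_eq (F : Type*) [Field F] (n k : ℕ)
    (y : Fin k → F) (S : Fin k → Finset (Fin n)) :
    svQspec F n k y S = ∑ i : Fin k, MvPolynomial.C (y i) * monomial (mlMon (S i)) 1 := by
  unfold svQspec
  refine Finset.sum_congr rfl fun i _ => ?_
  congr 1
  rw [mlMon, monomial_sum_one]
  calc ∏ j : Fin n, (MvPolynomial.C (if j ∈ S i then (1 : F) else 0) * MvPolynomial.X j +
        MvPolynomial.C (1 - if j ∈ S i then (1 : F) else 0))
      = ∏ j : Fin n, (if j ∈ S i then (MvPolynomial.X j : MvPolynomial (Fin n) F) else 1) := by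
        refine Finset.prod_congr rfl fun j _ => ?_
        by_cases h : j ∈ S i <;> simp [h]
    _ = ∏ j ∈ S i, (MvPolynomial.X j : MvPolynomial (Fin n) F) := by
        rw [Finset.prod_ite_mem, Finset.univ_inter]
    _ = _ := by
        refine Finset.prod_congr rfl fun j _ => ?_
        rw [X]

/-- with `z_i = 1_{S_i}` for distinct subsets `S_1,…,S_k`, the coordinate of
the succinct SV generator indexed by `S` equals `y_i` if `S = S_i` and `0` if `S ∉ T`. -/
theorem stmt9 (F : Type*) [Field F] (n k : ℕ) (S : Fin k → Finset (Fin n))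
    (hS : Function.Injective S) (y : Fin k → F) :
    (∀ i : Fin k, (svQspec F n k y S).coeff (mlMon (S i)) = y i) ∧
      (∀ T : Finset (Fin n), (∀ i : Fin k, T ≠ S i) →
        (svQspec F n k y S).coeff (mlMon T) = 0) := by
  have hcoeff : ∀ T : Finset (Fin n), (svQspec F n k y S).coeff (mlMon T) =
      ∑ i : Fin k, if S i = T then y i else 0 := by
    intro T
    rw [svQspec_eq]
    simp only [coeff_sum, coeff_C_mul, coeff_monomial]
    refine Finset.sum_congr rfl fun i _ => ?_
    by_cases h : S i = T
    · simp [h]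
    · have : mlMon (S i) ≠ mlMon T := fun hc => h (mlMon_inj hc)
      simp [h, this]
  constructor
  · intro i
    rw [hcoeff]
    rw [Finset.sum_eq_single i]
    · simp
    · intro b _ hb
      have : S b ≠ S i := fun hc => hb (hS hc)
      simp [this]
    · simp
  · intro T hT
    rw [hcoeff]
    refine Finset.sum_eq_zero fun i _ => ?_
    simp [(hT i).symm]
end
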